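/- Let F ∈ A[[x,y]] and G ∈ B[[x,y]] be commutative formal group laws over commutative rings A and B, let φ: A → B be a ring homomorphism, and let γ ∈ B[[x]] have zero constant term and satisfy φ(F)(γ(x), γ(y)) = γ(G(x, y)) in B[[x,y]]. If the linear coefficient of γ is zero and γ ≠ 0, then the lowest-degree nonzero coefficient b of γ, occurring in some degree r > 1, satisfies d(r)·b = 0, where d(r) = gcd{ C(r,i) : 0 < i < r }. -/

import Mathlib

/-- Substitution of a power series `g` (intended with zero constant term) into a
one-variable power series `γ`: the coefficient at `d` of `γ(g)` is the (exact, when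
`g` has zero constant term) truncated sum `∑_{n ≤ |d|} γ_n · coeff d (g^n)`. -/
noncomputable def psSubst {B : Type*} [CommRing B] {σ : Type*} (g : MvPowerSeries σ B)
    (γ : PowerSeries B) : MvPowerSeries σ B :=
  fun d => ∑ n ∈ Finset.range ((d.sum fun _ m => m) + 1),
    PowerSeries.coeff n γ * MvPowerSeries.coeff d (g ^ n)

/-- Substitution of a `k`-tuple of power series (intended with zero constant terms)
into a `k`-variable power series `F`, applying `φ` to the coefficients of `F`. -/
noncomputable def mvSubst {A B : Type*} [CommRing A] [CommRing B] {k : ℕ} {σ : Type*}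
    (φ : A →+* B) (g : Fin k → MvPowerSeries σ B) (F : MvPowerSeries (Fin k) A) :
    MvPowerSeries σ B :=
  fun d => ∑ e ∈ Finset.Icc (0 : Fin k →₀ ℕ)
      (Finsupp.equivFunOnFinite.symm (Function.const (Fin k) (d.sum fun _ m => m))),
    φ (MvPowerSeries.coeff e F) * MvPowerSeries.coeff d (∏ i, g i ^ e i)

/-- A (one-dimensional, commutative) formal group law `F ∈ A[[x,y]]`. -/
structure IsFGL {A : Type*} [CommRing A] (F : MvPowerSeries (Fin 2) A) : Prop where
  zero_right : mvSubst (RingHom.id A) ![MvPowerSeries.X 0, 0] F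
      = (MvPowerSeries.X 0 : MvPowerSeries (Fin 2) A)
  zero_left : mvSubst (RingHom.id A) ![0, MvPowerSeries.X 1] F
      = (MvPowerSeries.X 1 : MvPowerSeries (Fin 2) A)
  comm : mvSubst (RingHom.id A) ![MvPowerSeries.X 1, MvPowerSeries.X 0] F = F
  assoc : mvSubst (RingHom.id A)
        ![mvSubst (RingHom.id A) ![MvPowerSeries.X 0, MvPowerSeries.X 1] F,
          (MvPowerSeries.X 2 : MvPowerSeries (Fin 3) A)] F
      = mvSubst (RingHom.id A)
        ![(MvPowerSeries.X 0 : MvPowerSeries (Fin 3) A),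
          mvSubst (RingHom.id A) ![MvPowerSeries.X 1, MvPowerSeries.X 2] F] F

/-- A homomorphism of formal group laws `(A,F) → (B,G)`: a ring map `φ` and a power
series `γ` with zero constant term with `φ(F)(γ(x),γ(y)) = γ(G(x,y))`. -/
structure IsFGLHom {A B : Type*} [CommRing A] [CommRing B] (F : MvPowerSeries (Fin 2) A)
    (G : MvPowerSeries (Fin 2) B) (φ : A →+* B) (γ : PowerSeries B) : Prop where
  const : PowerSeries.constantCoeff γ = 0
  hom : mvSubst φ ![psSubst (MvPowerSeries.X 0) γ, psSubst (MvPowerSeries.X 1) γ] F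
      = psSubst G γ

namespace FGLAux

open MvPowerSeries

variable {B : Type*} [CommRing B]

lemma deg_eq (d : Fin 2 →₀ ℕ) : (d.sum fun _ m => m) = d 0 + d 1 := by
  rw [Finsupp.sum_fintype]; exact Fin.sum_univ_two _
  intro; rfl

lemma fin2_decomp (d : Fin 2 →₀ ℕ) : d = Finsupp.single 0 (d 0) + Finsupp.single 1 (d 1) := by
  ext x; fin_cases x <;> simp [Finsupp.single_apply]

lemma deg_add (p q : Fin 2 →₀ ℕ) :
    ((p + q).sum fun _ m => m) = (p.sum fun _ m => m) + (q.sum fun _ m => m) :=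
  Finsupp.sum_add_index' (fun _ => rfl) (fun _ _ _ => rfl)

lemma apply_le_deg (d : Fin 2 →₀ ℕ) (s : Fin 2) : d s ≤ d.sum fun _ m => m := by
  fin_cases s <;> simp [deg_eq]

lemma coeff_psSubst (γ : PowerSeries B) (g : MvPowerSeries (Fin 2) B) (d : Fin 2 →₀ ℕ) :
    MvPowerSeries.coeff d (psSubst g γ)
      = ∑ n ∈ Finset.range ((d.sum fun _ m => m) + 1),
          PowerSeries.coeff n γ * MvPowerSeries.coeff d (g ^ n) := rfl

lemma coeff_psSubst_X (γ : PowerSeries B) (s : Fin 2) (d : Fin 2 →₀ ℕ) :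
    MvPowerSeries.coeff d (psSubst (X s) γ)
      = if d = Finsupp.single s (d s) then PowerSeries.coeff (d s) γ else 0 := by
  rw [coeff_psSubst]
  by_cases h : d = Finsupp.single s (d s)
  · rw [if_pos h, Finset.sum_eq_single (d s)]
    · rw [coeff_X_pow, if_pos h, mul_one]
    · intro n _ hne
      rw [coeff_X_pow, if_neg, mul_zero]
      intro hd; apply hne
      rw [hd]; simp
    · intro h'
      exact absurd (Finset.mem_range.2 (Nat.lt_succ_of_le (apply_le_deg d s))) h'
  · rw [if_neg h]
    apply Finset.sum_eq_zero
    intro n _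
    rw [coeff_X_pow, if_neg, mul_zero]
    intro hd; apply h; rw [hd]; simp

lemma coeff_psSubst_X_pow_of_ne (γ : PowerSeries B) (s t : Fin 2) (hst : t ≠ s) (a : ℕ) :
    ∀ d : Fin 2 →₀ ℕ, d t ≠ 0 → MvPowerSeries.coeff d (psSubst (X s) γ ^ a) = 0 := by
  induction a with
  | zero =>
    intro d hd
    rw [pow_zero, coeff_one, if_neg]
    intro h0; apply hd; rw [h0]; rfl
  | succ a ih =>
    intro d hd
    rw [pow_succ, coeff_mul]
    apply Finset.sum_eq_zero
    intro p hp
    rw [Finset.HasAntidiagonal.mem_antidiagonal] at hp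
    have hsum : p.1 t + p.2 t = d t := by rw [← Finsupp.add_apply, hp]
    by_cases h1 : p.1 t = 0
    · have h2 : p.2 t ≠ 0 := by omega
      rw [coeff_psSubst_X, if_neg, mul_zero]
      intro h; apply h2; rw [h]
      exact Finsupp.single_eq_of_ne' (Ne.symm hst)
    · rw [ih p.1 h1, zero_mul]

lemma coeff_mul_eq_zero (P Q : MvPowerSeries (Fin 2) B) (a b : ℕ)
    (hP : ∀ d : Fin 2 →₀ ℕ, (d.sum fun _ m => m) < a → MvPowerSeries.coeff d P = 0)
    (hQ : ∀ d : Fin 2 →₀ ℕ, (d.sum fun _ m => m) < b → MvPowerSeries.coeff d Q = 0)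
    (d : Fin 2 →₀ ℕ) (hd : (d.sum fun _ m => m) < a + b) :
    MvPowerSeries.coeff d (P * Q) = 0 := by
  rw [coeff_mul]
  apply Finset.sum_eq_zero
  intro p hp
  rw [Finset.HasAntidiagonal.mem_antidiagonal] at hp
  have hdeg : (p.1.sum fun _ m => m) + (p.2.sum fun _ m => m) = d.sum fun _ m => m := by
    rw [← deg_add, hp]
  by_cases h : (p.1.sum fun _ m => m) < a
  · rw [hP _ h, zero_mul]
  · rw [hQ _ (by omega), mul_zero]

lemma coeff_pow_eq_zero (P : MvPowerSeries (Fin 2) B) (a : ℕ)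
    (hP : ∀ d : Fin 2 →₀ ℕ, (d.sum fun _ m => m) < a → MvPowerSeries.coeff d P = 0) (n : ℕ) :
    ∀ d : Fin 2 →₀ ℕ, (d.sum fun _ m => m) < n * a → MvPowerSeries.coeff d (P ^ n) = 0 := by
  induction n with
  | zero => intro d hd; simp at hd
  | succ n ih =>
    intro d hd
    rw [Nat.succ_mul] at hd
    rw [pow_succ]
    exact coeff_mul_eq_zero _ _ (n * a) a ih hP d hd

lemma mvSubst_apply {A : Type*} [CommRing A] (φ : A →+* B) (g0 g1 : MvPowerSeries (Fin 2) B)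
    (F : MvPowerSeries (Fin 2) A) (d : Fin 2 →₀ ℕ) :
    MvPowerSeries.coeff d (mvSubst φ ![g0, g1] F)
      = ∑ e ∈ Finset.Icc (0 : Fin 2 →₀ ℕ)
          (Finsupp.equivFunOnFinite.symm (Function.const (Fin 2) (d.sum fun _ m => m))),
        φ (MvPowerSeries.coeff e F) * MvPowerSeries.coeff d (g0 ^ e 0 * g1 ^ e 1) := by
  show (∑ e ∈ _, _) = _
  apply Finset.sum_congr rfl
  intro e _
  congr 2
  rw [Fin.prod_univ_two]
  simp


-- positions of the Icc endpoint
lemma mem_Icc_iff (d : Fin 2 →₀ ℕ) (e : Fin 2 →₀ ℕ) :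
    e ∈ Finset.Icc (0 : Fin 2 →₀ ℕ)
        (Finsupp.equivFunOnFinite.symm (Function.const (Fin 2) (d.sum fun _ m => m)))
      ↔ ∀ i, e i ≤ d.sum fun _ m => m := by
  rw [Finset.mem_Icc]
  constructor
  · intro h i
    have := (Finsupp.le_def.1 h.2) i
    simpa using this
  · intro h
    refine ⟨zero_le, Finsupp.le_def.2 fun i => ?_⟩
    simpa using h i

lemma G_coeff_right (G : MvPowerSeries (Fin 2) B)
    (h : mvSubst (RingHom.id B) ![MvPowerSeries.X 0, 0] G
        = (MvPowerSeries.X 0 : MvPowerSeries (Fin 2) B)) (m : ℕ) :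
    MvPowerSeries.coeff (Finsupp.single 0 m) G = if m = 1 then 1 else 0 := by
  have hd := congrArg (MvPowerSeries.coeff (Finsupp.single 0 m)) h
  rw [mvSubst_apply] at hd
  have hdm : ((Finsupp.single (0 : Fin 2) m).sum fun _ k => k) = m := by
    simp [deg_eq, Finsupp.single_apply]
  rw [Finset.sum_eq_single (Finsupp.single (0 : Fin 2) m)] at hd
  · rw [Finsupp.single_eq_same, Finsupp.single_eq_of_ne' (by decide : (0:Fin 2) ≠ 1),
      pow_zero, mul_one, coeff_X_pow, if_pos rfl, mul_one, RingHom.id_apply, coeff_X] at hd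
    rw [hd]
    by_cases hm : m = 1
    · subst hm; simp
    · rw [if_neg hm, if_neg]
      intro hh
      apply hm
      have := congrFun (congrArg (fun f : Fin 2 →₀ ℕ => (f : Fin 2 → ℕ)) hh) 0
      simpa using this
  · intro e _ hne
    by_cases h1 : e 1 = 0
    · rw [h1, pow_zero, mul_one, coeff_X_pow, if_neg, mul_zero]
      intro hh
      apply hne
      have hm0 : m = e 0 := by
        have := congrFun (congrArg (fun f : Fin 2 →₀ ℕ => (f : Fin 2 → ℕ)) hh) 0
        simpa using this
      rw [fin2_decomp e, h1, hm0]
      simp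
    · rw [zero_pow h1, mul_zero, map_zero, mul_zero]
  · intro hmem
    exfalso
    apply hmem
    rw [mem_Icc_iff, hdm]
    intro i
    fin_cases i <;> simp [Finsupp.single_apply]

lemma G_coeff_left (G : MvPowerSeries (Fin 2) B)
    (h : mvSubst (RingHom.id B) ![0, MvPowerSeries.X 1] G
        = (MvPowerSeries.X 1 : MvPowerSeries (Fin 2) B)) (m : ℕ) :
    MvPowerSeries.coeff (Finsupp.single 1 m) G = if m = 1 then 1 else 0 := by
  have hd := congrArg (MvPowerSeries.coeff (Finsupp.single 1 m)) h
  rw [mvSubst_apply] at hd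
  have hdm : ((Finsupp.single (1 : Fin 2) m).sum fun _ k => k) = m := by
    simp [deg_eq, Finsupp.single_apply]
  rw [Finset.sum_eq_single (Finsupp.single (1 : Fin 2) m)] at hd
  · rw [Finsupp.single_eq_same, Finsupp.single_eq_of_ne' (by decide : (1:Fin 2) ≠ 0),
      pow_zero, one_mul, coeff_X_pow, if_pos rfl, mul_one, RingHom.id_apply, coeff_X] at hd
    rw [hd]
    by_cases hm : m = 1
    · subst hm; simp
    · rw [if_neg hm, if_neg]
      intro hh
      apply hm
      have := congrFun (congrArg (fun f : Fin 2 →₀ ℕ => (f : Fin 2 → ℕ)) hh) 1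
      simpa using this
  · intro e _ hne
    by_cases h0 : e 0 = 0
    · rw [h0, pow_zero, one_mul, coeff_X_pow, if_neg, mul_zero]
      intro hh
      apply hne
      have hm0 : m = e 1 := by
        have := congrFun (congrArg (fun f : Fin 2 →₀ ℕ => (f : Fin 2 → ℕ)) hh) 1
        simpa using this
      rw [fin2_decomp e, h0, hm0]
      simp
    · rw [zero_pow h0, zero_mul, map_zero, mul_zero]
  · intro hmem
    exfalso
    apply hmem
    rw [mem_Icc_iff, hdm]
    intro i
    fin_cases i <;> simp [Finsupp.single_apply]


lemma coeff_X_pow_mul_X_pow (i j : ℕ) (d : Fin 2 →₀ ℕ) :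
    MvPowerSeries.coeff d ((X 0 : MvPowerSeries (Fin 2) B) ^ i * X 1 ^ j)
      = if d = Finsupp.single 0 i + Finsupp.single 1 j then 1 else 0 := by
  rw [X_pow_eq, X_pow_eq, monomial_mul_monomial, coeff_monomial, one_mul]

lemma coeff_S_pow (n : ℕ) (d : Fin 2 →₀ ℕ) (hd : (d.sum fun _ m => m) = n) :
    MvPowerSeries.coeff d ((X 0 + X 1 : MvPowerSeries (Fin 2) B) ^ n)
      = (n.choose (d 0) : B) := by
  have hdn : d 0 + d 1 = n := by rw [← deg_eq, hd]
  rw [add_pow, map_sum, Finset.sum_eq_single (d 0)]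
  · rw [mul_comm, ← nsmul_eq_mul, map_nsmul, coeff_X_pow_mul_X_pow, if_pos, nsmul_eq_mul, mul_one]
    rw [show n - d 0 = d 1 by omega]
    exact fin2_decomp d
  · intro k hk hkne
    rw [mul_comm, ← nsmul_eq_mul, map_nsmul, coeff_X_pow_mul_X_pow, if_neg, smul_zero]
    intro hh
    apply hkne
    have := congrFun (congrArg (fun f : Fin 2 →₀ ℕ => (f : Fin 2 → ℕ)) hh) 0
    exact (by simpa [Finsupp.single_apply] using this : d 0 = k).symm
  · intro h
    exact absurd (Finset.mem_range.2 (by omega)) h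

lemma coeff_G_pow (G : MvPowerSeries (Fin 2) B)
    (h0 : MvPowerSeries.coeff 0 G = 0)
    (h10 : MvPowerSeries.coeff (Finsupp.single 0 1) G = 1)
    (h01 : MvPowerSeries.coeff (Finsupp.single 1 1) G = 1)
    (n : ℕ) (d : Fin 2 →₀ ℕ) (hd : (d.sum fun _ m => m) = n) :
    MvPowerSeries.coeff d (G ^ n) = (n.choose (d 0) : B) := by
  set S : MvPowerSeries (Fin 2) B := X 0 + X 1 with hS
  have hSlow : ∀ e : Fin 2 →₀ ℕ, (e.sum fun _ m => m) < 1 → MvPowerSeries.coeff e S = 0 := by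
    intro e he
    rw [deg_eq] at he
    have h1 : e 0 = 0 ∧ e 1 = 0 := by omega
    have he0 : e = 0 := by rw [fin2_decomp e, h1.1, h1.2]; simp
    rw [he0, hS, map_add, coeff_X, coeff_X, if_neg, if_neg, add_zero]
    · exact Ne.symm (by simp)
    · exact Ne.symm (by simp)
  have hHlow : ∀ e : Fin 2 →₀ ℕ, (e.sum fun _ m => m) < 2 → MvPowerSeries.coeff e (G - S) = 0 := by
    intro e he
    rw [deg_eq] at he
    rw [map_sub]
    rcases (by omega : (e 0 = 0 ∧ e 1 = 0) ∨ (e 0 = 1 ∧ e 1 = 0) ∨ (e 0 = 0 ∧ e 1 = 1)) with h | h | h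
    · have he0 : e = 0 := by rw [fin2_decomp e, h.1, h.2]; simp
      rw [he0, h0, hSlow 0 (by simp), sub_zero]
    · have he0 : e = Finsupp.single 0 1 := by rw [fin2_decomp e, h.1, h.2]; simp
      rw [he0, h10, hS, map_add, coeff_X, coeff_X, if_pos rfl, if_neg, add_zero, sub_self]
      simp [Finsupp.single_eq_single_iff]
    · have he0 : e = Finsupp.single 1 1 := by rw [fin2_decomp e, h.1, h.2]; simp
      rw [he0, h01, hS, map_add, coeff_X, coeff_X, if_pos rfl, if_neg, zero_add, sub_self]
      simp [Finsupp.single_eq_single_iff]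
  have hG' : G = S + (G - S) := by ring
  rw [show G ^ n = (S + (G - S)) ^ n by rw [← hG'], add_pow, map_sum,
    Finset.sum_eq_single n]
  · rw [Nat.sub_self, pow_zero, mul_one, Nat.choose_self, Nat.cast_one, mul_one, coeff_S_pow n d hd]
  · intro k hk hkne
    have hklt : k < n := lt_of_le_of_ne (Nat.lt_succ_iff.1 (Finset.mem_range.1 hk)) hkne
    rw [mul_comm, ← nsmul_eq_mul, map_nsmul,
      coeff_mul_eq_zero _ _ k (2 * (n - k))
        (fun e hh => coeff_pow_eq_zero S 1 hSlow k e (by omega))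
        (fun e hh => coeff_pow_eq_zero (G - S) 2 hHlow (n - k) e (by omega))
        d (by omega), smul_zero]
  · intro h
    exact absurd (Finset.mem_range.2 (Nat.lt_succ_self n)) h

lemma nat_gcd_smul {M : Type*} [AddCommGroup M] (m n : ℕ) (b : M)
    (hm : m • b = 0) (hn : n • b = 0) : Nat.gcd m n • b = 0 := by
  have h : ((Nat.gcd m n : ℤ)) • b = 0 := by
    rw [Nat.gcd_eq_gcd_ab, mul_comm (m : ℤ), mul_comm (n : ℤ), add_smul, mul_smul, mul_smul,
      natCast_zsmul, natCast_zsmul, hm, hn, smul_zero, smul_zero, add_zero]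
  rw [natCast_zsmul] at h
  exact h

lemma gcd_smul_eq_zero {M : Type*} [AddCommGroup M] (b : M) (s : Finset ℕ) (f : ℕ → ℕ)
    (h : ∀ i ∈ s, f i • b = 0) : (s.gcd f) • b = 0 := by
  classical
  induction s using Finset.induction_on with
  | empty => simp
  | @insert a s ha ih =>
    rw [Finset.gcd_insert]
    exact nat_gcd_smul _ _ _ (h a (Finset.mem_insert_self a s))
      (ih fun i hi => h i (Finset.mem_insert_of_mem hi))

end FGLAux

open FGLAux MvPowerSeries

/-- If `(φ,γ)` is a homomorphism of formal group laws with vanishing linear coefficient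
and `γ ≠ 0`, then the lowest-degree nonzero coefficient `b` of `γ`, occurring in some
degree `r > 1`, satisfies `d(r)·b = 0` where `d(r) = gcd{C(r,i) : 0 < i < r}`. -/
theorem stmt4 {A B : Type*} [CommRing A] [CommRing B]
    (F : MvPowerSeries (Fin 2) A) (G : MvPowerSeries (Fin 2) B)
    (hF : IsFGL F) (hG : IsFGL G) (φ : A →+* B) (γ : PowerSeries B)
    (hhom : IsFGLHom F G φ γ)
    (h1 : PowerSeries.coeff 1 γ = 0) (hγ : γ ≠ 0) :
    ∃ r : ℕ, 1 < r ∧ (∀ m < r, PowerSeries.coeff m γ = 0) ∧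
      PowerSeries.coeff r γ ≠ 0 ∧
      ((Finset.Ioo 0 r).gcd fun i => r.choose i) • PowerSeries.coeff r γ = 0 := by
  classical
  have hex : ∃ n, PowerSeries.coeff n γ ≠ 0 := by
    by_contra h
    push_neg at h
    exact hγ (PowerSeries.ext fun n => by simp [h n])
  set r := Nat.find hex with hrdef
  have hrne : PowerSeries.coeff r γ ≠ 0 := Nat.find_spec hex
  have hlow : ∀ m < r, PowerSeries.coeff m γ = 0 := fun m hm =>
    not_not.mp (Nat.find_min hex hm)
  have hr0 : r ≠ 0 := by
    intro h
    apply hrne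
    rw [h]
    simpa using hhom.const
  have hr1 : r ≠ 1 := by
    intro h; rw [h] at hrne; exact hrne h1
  have hr : 1 < r := by omega
  have hG10 : MvPowerSeries.coeff (Finsupp.single 0 1) G = 1 := by
    rw [G_coeff_right G hG.zero_right 1]; simp
  have hG01 : MvPowerSeries.coeff (Finsupp.single 1 1) G = 1 := by
    rw [G_coeff_left G hG.zero_left 1]; simp
  have hG0 : MvPowerSeries.coeff 0 G = 0 := by
    have := G_coeff_right G hG.zero_right 0
    rw [Finsupp.single_zero] at this
    simpa using this
  have hglow : ∀ s : Fin 2, ∀ e : Fin 2 →₀ ℕ, (e.sum fun _ m => m) < r →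
      MvPowerSeries.coeff e (psSubst (MvPowerSeries.X s) γ) = 0 := by
    intro s e he
    rw [coeff_psSubst_X]
    split
    · exact hlow _ (lt_of_le_of_lt (apply_le_deg e s) he)
    · rfl
  have key : ∀ i ∈ Finset.Ioo 0 r, (r.choose i) • PowerSeries.coeff r γ = 0 := by
    intro i hi
    rw [Finset.mem_Ioo] at hi
    set d : Fin 2 →₀ ℕ := Finsupp.single 0 i + Finsupp.single 1 (r - i) with hdd
    have hd0 : d 0 = i := by simp [hdd, Finsupp.single_apply]
    have hd1 : d 1 = r - i := by simp [hdd, Finsupp.single_apply]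
    have hdeg : (d.sum fun _ m => m) = r := by rw [deg_eq, hd0, hd1]; omega
    have heq := congrArg (MvPowerSeries.coeff d) hhom.hom
    rw [mvSubst_apply] at heq
    have hzero : ∀ e ∈ Finset.Icc (0 : Fin 2 →₀ ℕ)
        (Finsupp.equivFunOnFinite.symm (Function.const (Fin 2) (d.sum fun _ m => m))),
        φ (MvPowerSeries.coeff e F) * MvPowerSeries.coeff d
          (psSubst (MvPowerSeries.X 0) γ ^ e 0 * psSubst (MvPowerSeries.X 1) γ ^ e 1) = 0 := by
      intro e _
      have hinner : MvPowerSeries.coeff d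
          (psSubst (MvPowerSeries.X 0) γ ^ e 0 * psSubst (MvPowerSeries.X 1) γ ^ e 1) = 0 := by
        rw [coeff_mul]
        apply Finset.sum_eq_zero
        intro p hp
        rw [Finset.HasAntidiagonal.mem_antidiagonal] at hp
        have h0s : p.1 0 + p.2 0 = d 0 := by rw [← Finsupp.add_apply, hp]
        by_cases hp1 : p.1 1 = 0
        · by_cases hq0 : p.2 0 = 0
          · have hp10 : p.1 0 = i := by omega
            rcases Nat.eq_zero_or_pos (e 0) with he0 | he0
            · rw [he0, pow_zero, coeff_one, if_neg, zero_mul]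
              intro hz
              have hz0 : p.1 0 = 0 := by rw [hz]; rfl
              omega
            · have hdp : (p.1.sum fun _ m => m) = i := by rw [deg_eq, hp10, hp1]; omega
              rw [coeff_pow_eq_zero _ r (hglow 0) (e 0) p.1
                (by rw [hdp]; exact lt_of_lt_of_le hi.2 (Nat.le_mul_of_pos_left r he0)), zero_mul]
          · rw [coeff_psSubst_X_pow_of_ne γ 1 0 (by decide) (e 1) p.2 hq0, mul_zero]
        · rw [coeff_psSubst_X_pow_of_ne γ 0 1 (by decide) (e 0) p.1 hp1, zero_mul]
      rw [hinner, mul_zero]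
    rw [Finset.sum_eq_zero hzero] at heq
    rw [coeff_psSubst, hdeg] at heq
    have hsum : (∑ n ∈ Finset.range (r + 1),
        PowerSeries.coeff n γ * MvPowerSeries.coeff d (G ^ n))
        = PowerSeries.coeff r γ * (r.choose i : B) := by
      rw [Finset.sum_eq_single r]
      · rw [coeff_G_pow G hG0 hG10 hG01 r d hdeg, hd0]
      · intro n hn hne
        rw [Finset.mem_range] at hn
        rw [hlow n (by omega), zero_mul]
      · intro h; exact absurd (Finset.mem_range.2 (by omega)) h
    rw [hsum] at heq
    rw [nsmul_eq_mul, mul_comm, ← heq]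
  exact ⟨r, hr, hlow, hrne, gcd_smul_eq_zero _ _ _ key⟩
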